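/- Let x be a regular ultrafilter on κ, and let Y be a compact Hausdorff space of weight at most κ, with y ∈ F ⊆ Y and F having empty interior. Then there is a function g : κ → Y such that the Stone extension βg : βκ → Y is onto, (βg)(x) = y, and g(ξ) ∉ F for all ξ < κ (hence g⁻¹(F) is nowhere dense in βκ, being a subset of κ* with empty interior). -/

import Mathlib

open Cardinal TopologicalSpace

/-- `x` is regular iff there are `E_α ∈ x` for `α < κ` such that every `ξ < κ`
belongs to only finitely many `E_α`. -/
def Ultrafilter.IsRegularUF {κ : Type*} (x : Ultrafilter κ) : Prop :=
  ∃ E : κ → Set κ, (∀ α, E α ∈ x) ∧ ∀ ξ, {α | ξ ∈ E α}.Finite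

/-- The weight of a topological space: the least cardinality of a base. -/
noncomputable def weight (Y : Type*) [TopologicalSpace Y] : Cardinal :=
  ⨅ B : {B : Set (Set Y) // IsTopologicalBasis B}, #B.1

/-- Let `x` be a regular ultrafilter on an infinite cardinal `κ`, `Y` compact Hausdorff
of weight at most `κ`, `y ∈ F ⊆ Y` with `F` of empty interior.  Then there is
`g : κ → Y` whose Stone extension `βg : βκ → Y` is onto, with `βg(x) = y` and
`g(ξ) ∉ F` for all `ξ`; hence `g⁻¹(F)`, viewed as a subset of `βκ` via `pure`,
is nowhere dense in `βκ`. -/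
theorem regular_ultrafilter_map_onto {κ : Type u} [Infinite κ] (x : Ultrafilter κ)
    (hx : x.IsRegularUF) {Y : Type u} [TopologicalSpace Y] [CompactSpace Y] [T2Space Y]
    (F : Set Y) (y : Y) (hyF : y ∈ F) (hw : weight Y ≤ #κ) (hF : interior F = ∅) :
    ∃ g : κ → Y,
      Function.Surjective (Ultrafilter.extend g) ∧
      Ultrafilter.extend g x = y ∧
      (∀ ξ : κ, g ξ ∉ F) ∧
      IsNowhereDense ((pure : κ → Ultrafilter κ) '' (g ⁻¹' F)) := by
  classical
  have hYne : Nonempty Y := ⟨y⟩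
  have hdense : Dense Fᶜ := interior_eq_empty_iff_dense_compl.mp hF
  -- a basis indexed by κ
  obtain ⟨u, hu⟩ : ∃ u : κ → Set Y, IsTopologicalBasis (Set.range u) := by
    have hne : Nonempty {B : Set (Set Y) // IsTopologicalBasis B} :=
      ⟨⟨{U | IsOpen U}, isTopologicalBasis_opens⟩⟩
    obtain ⟨⟨B, hB⟩, hBval⟩ := ciInf_mem (fun B : {B : Set (Set Y) // IsTopologicalBasis B} => #B.1)
    have hBle : #B ≤ #κ := le_trans (le_of_eq hBval) hw
    -- B is nonempty since y is in some basic set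
    obtain ⟨b₀, hb₀B, -⟩ := hB.exists_subset_of_mem_open (Set.mem_univ y) isOpen_univ
    have hBne : Nonempty B := ⟨⟨b₀, hb₀B⟩⟩
    obtain ⟨i⟩ := Cardinal.le_def _ _ |>.mp hBle
    set v : κ → B := Function.invFun (i : B → κ) with hv
    have hsurj : Function.Surjective v := Function.invFun_surjective i.injective
    refine ⟨fun α => (v α).1, ?_⟩
    have : Set.range (fun α => (v α).1) = B := by
      ext s
      constructor
      · rintro ⟨α, rfl⟩; exact (v α).2
      · intro hs
        obtain ⟨α, hα⟩ := hsurj ⟨s, hs⟩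
        exact ⟨α, by simp [hα]⟩
    rw [this]; exact hB
  obtain ⟨E, hEx, hEfin⟩ := hx
  -- an injection j : κ → κ whose range's complement is in x
  obtain ⟨j, hjinj, hjx⟩ : ∃ j : κ → κ, Function.Injective j ∧ (Set.range j)ᶜ ∈ x := by
    have hcard : #(κ ⊕ κ) = #κ := by
      simp [Cardinal.mk_sum, Cardinal.add_eq_self (Cardinal.aleph0_le_mk κ)]
    obtain ⟨e⟩ := Cardinal.eq.mp hcard
    have key : ∀ ξ : κ, ξ ∈ Set.range (e ∘ Sum.inl) ↔ ξ ∉ Set.range (e ∘ Sum.inr) := by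
      intro ξ
      constructor
      · rintro ⟨a, ha⟩ ⟨b, hb⟩
        exact Sum.inl_ne_inr (e.injective (ha.trans hb.symm))
      · intro h
        rcases hs : e.symm ξ with a | b
        · exact ⟨a, by rw [Function.comp_apply, ← hs, Equiv.apply_symm_apply]⟩
        · exact absurd ⟨b, by rw [Function.comp_apply, ← hs, Equiv.apply_symm_apply]⟩ h
      
    by_cases h : Set.range (e ∘ Sum.inl) ∈ x
    · refine ⟨e ∘ Sum.inr, e.injective.comp Sum.inr_injective, ?_⟩
      have : (Set.range (e ∘ Sum.inr))ᶜ = Set.range (e ∘ Sum.inl) := by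
        ext ξ; simp only [Set.mem_compl_iff, key]
      rw [this]; exact h
    · exact ⟨e ∘ Sum.inl, e.injective.comp Sum.inl_injective,
        Ultrafilter.compl_mem_iff_notMem.mpr h⟩
  -- point of u α avoiding F, when u α is nonempty
  have hd : ∀ α : κ, ∃ z : Y, z ∉ F ∧ ((u α).Nonempty → z ∈ u α) := by
    intro α
    by_cases h : (u α).Nonempty
    · obtain ⟨z, hz1, hz2⟩ := hdense.inter_open_nonempty (u α) (hu.isOpen ⟨α, rfl⟩) h
      exact ⟨z, hz2, fun _ => hz1⟩
    · obtain ⟨z, hz⟩ := hdense.nonempty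
      exact ⟨z, hz, fun h' => absurd h' h⟩
  choose d hdF hdu using hd
  -- point near y avoiding F, in all relevant basic sets
  have hw' : ∀ ξ : κ, ∃ z : Y, z ∉ F ∧ ∀ α, ξ ∈ E α → y ∈ u α → z ∈ u α := by
    intro ξ
    set T := {α | ξ ∈ E α ∧ y ∈ u α} with hT
    have hTfin : T.Finite := (hEfin ξ).subset fun α hα => hα.1
    have hopen : IsOpen (⋂ α ∈ T, u α) :=
      hTfin.isOpen_biInter fun α _ => hu.isOpen ⟨α, rfl⟩
    have hyV : y ∈ ⋂ α ∈ T, u α := Set.mem_biInter fun α hα => hα.2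
    obtain ⟨z, hz1, hz2⟩ := hdense.inter_open_nonempty _ hopen ⟨y, hyV⟩
    exact ⟨z, hz2, fun α h1 h2 => Set.mem_iInter₂.mp hz1 α ⟨h1, h2⟩⟩
  choose w hwF hwu using hw'
  set g : κ → Y := fun ξ => if h : ξ ∈ Set.range j then d h.choose else w ξ with hg
  have hgj : ∀ α, g (j α) = d α := by
    intro α
    have h : j α ∈ Set.range j := ⟨α, rfl⟩
    simp only [hg, dif_pos h]
    exact congrArg d (hjinj h.choose_spec)
  have hgS : ∀ ξ, ξ ∉ Set.range j → g ξ = w ξ := fun ξ h => dif_neg h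
  have hgF : ∀ ξ, g ξ ∉ F := by
    intro ξ
    by_cases h : ξ ∈ Set.range j
    · rw [hg]; simp only [dif_pos h]; exact hdF _
    · rw [hgS ξ h]; exact hwF ξ
  -- dense range
  have hdr : DenseRange g := by
    rw [DenseRange, hu.dense_iff]
    rintro o ⟨α, rfl⟩ ho
    exact ⟨d α, hdu α ho, ⟨j α, hgj α⟩⟩
  -- convergence of the pushforward to y
  have hconv : ↑(x.map g) ≤ nhds y := by
    intro U hU
    obtain ⟨v, ⟨α, rfl⟩, hyv, hvU⟩ := hu.mem_nhds_iff.mp hU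
    have hsub : E α ∩ (Set.range j)ᶜ ⊆ g ⁻¹' U := by
      rintro ξ ⟨h1, h2⟩
      rw [Set.mem_preimage, hgS ξ h2]
      exact hvU (hwu ξ α h1 hyv)
    exact Ultrafilter.mem_coe.mpr
      (Ultrafilter.mem_map.mpr (x.mem_of_superset (x.inter_mem (hEx α) hjx) hsub))
  have hext : Ultrafilter.extend g x = y := ultrafilter_extend_eq_iff.mpr hconv
  -- surjectivity of the extension
  have hsurj : Function.Surjective (Ultrafilter.extend g) := by
    have h1 : IsClosed (Set.range (Ultrafilter.extend g)) :=
      (isCompact_range (continuous_ultrafilter_extend g)).isClosed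
    have h2 : Set.range g ⊆ Set.range (Ultrafilter.extend g) := by
      rintro _ ⟨ξ, rfl⟩
      exact ⟨pure ξ, congrFun (ultrafilter_extend_extends g) ξ⟩
    intro z
    have hz : z ∈ closure (Set.range g) := hdr z
    exact h1.closure_subset_iff.mpr h2 hz
  refine ⟨g, hsurj, hext, hgF, ?_⟩
  have hpre : g ⁻¹' F = ∅ := by
    ext ξ; simp [hgF ξ]
  rw [hpre, Set.image_empty]
  simp [IsNowhereDense]
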